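/- arXiv:2501.15952 — 3 statements merged into one kernel-verified Lean document; each statement's English description precedes it below -/
import Mathlib

section
/- Let G be a graph and S⊆V(G) a set satisfying (H1) and (H2). Then for every edge e=ab of G[S], the set N_G(a)∩N_G(b)∩(V(G)∖S) induces a complete multipartite subgraph of G, and if B_e is nonempty then this induced subgraph is complete bipartite (complete multipartite with exactly two classes). -/
namespace PrisonFreePaper

variable {V : Type*}

/-- The prison graph on 5 vertices: `K₅` minus the two edges `{4,2}` and `{4,3}`
(which share the vertex `4`).  Thus `{0,1,2,3}` is a 4-clique and the vertex `4`
is adjacent exactly to `0` and `1`. -/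
def prison : SimpleGraph (Fin 5) where
  Adj a b := a ≠ b ∧ ¬((a = 4 ∧ (b = 2 ∨ b = 3)) ∨ (b = 4 ∧ (a = 2 ∨ a = 3)))
  symm := by
    constructor
    rintro a b ⟨h1, h2⟩
    exact ⟨h1.symm, by tauto⟩
  loopless := by
    constructor
    rintro a ⟨h, _⟩
    exact h rfl

/-- `P` is a 5-vertex set inducing a subgraph of `G` isomorphic to the prison. -/
def InducesPrison (G : SimpleGraph V) (P : Set V) : Prop :=
  ∃ f : Fin 5 ↪ V, Set.range f = P ∧ ∀ a b, G.Adj (f a) (f b) ↔ prison.Adj a b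

/-- `G` is prison-free: no 5-vertex set induces a prison. -/
def PrisonFree (G : SimpleGraph V) : Prop :=
  ¬ ∃ P : Set V, InducesPrison G P

/-- `P` is the set of classes witnessing that the induced subgraph `G[F]` is
complete multipartite: the classes are nonempty, pairwise disjoint, their union
is `F`, and two vertices of `F` are adjacent iff they lie in different classes. -/
def IsCMP (G : SimpleGraph V) (F : Set V) (P : Set (Set V)) : Prop :=
  (∀ C ∈ P, C.Nonempty ∧ C ⊆ F) ∧
  (⋃₀ P = F) ∧
  (∀ C ∈ P, ∀ D ∈ P, C ≠ D → Disjoint C D) ∧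
  (∀ u ∈ F, ∀ v ∈ F, (G.Adj u v ↔ ¬ ∃ C ∈ P, u ∈ C ∧ v ∈ C))

/-- The induced subgraph `G[F]` is complete multipartite. -/
def CMP (G : SimpleGraph V) (F : Set V) : Prop := ∃ P, IsCMP G F P

/-- The induced subgraph `G[F]` is complete multipartite with at least `p` classes. -/
def CMPAtLeast (G : SimpleGraph V) (F : Set V) (p : ℕ) : Prop :=
  ∃ P, IsCMP G F P ∧ ∃ f : Fin p ↪ Set V, ∀ i, f i ∈ P

/-- `F ∈ cmd_p` of the induced subgraph of `G` on the ground set `W`: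
`F` is an inclusion-wise maximal subset of `W` inducing a complete multipartite
graph with at least `p` classes. -/
def Cmd (G : SimpleGraph V) (W : Set V) (p : ℕ) (F : Set V) : Prop :=
  F ⊆ W ∧ CMPAtLeast G F p ∧
    ∀ F', F' ⊆ W → F ⊆ F' → CMPAtLeast G F' p → F' = F

/-- The neighbourhood of `v` in `G` intersects at most one class of `P`. -/
def MeetsAtMostOneClass (G : SimpleGraph V) (P : Set (Set V)) (v : V) : Prop :=
  ∀ C ∈ P, ∀ D ∈ P, (∃ x ∈ C, G.Adj v x) → (∃ y ∈ D, G.Adj v y) → C = D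

/-- The induced subgraph `G[X]`, viewed as a graph on the same vertex set
(only edges with both endpoints in `X` are kept). -/
def inducedOn (G : SimpleGraph V) (X : Set V) : SimpleGraph V where
  Adj a b := G.Adj a b ∧ a ∈ X ∧ b ∈ X
  symm := by constructor; rintro a b ⟨h, ha, hb⟩; exact ⟨h.symm, hb, ha⟩
  loopless := by constructor; rintro a ⟨h, _⟩; exact G.irrefl h

/-- The set of edges of `G` with both endpoints in `X`, i.e. the edges of `G[X]`. -/
def edgesWithin (G : SimpleGraph V) (X : Set V) : Set (Sym2 V) :=
  (inducedOn G X).edgeSet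

/-- `(G,k)` is a yes-instance of Prison-Free Edge Deletion. -/
def DeletionYes (G : SimpleGraph V) (k : ℕ) : Prop :=
  ∃ A : Set (Sym2 V), A ⊆ G.edgeSet ∧ A.Finite ∧ A.ncard ≤ k ∧
    PrisonFree (G.deleteEdges A)

/-- `P` is a strict supergraph of a prison in `G`: a 5-vertex set whose induced
subgraph is `K₅` or `K₅` minus one edge (at most one non-adjacent pair). -/
def StrictSupPrison (G : SimpleGraph V) (P : Set V) : Prop :=
  P.ncard = 5 ∧ ∃ u v : V, ∀ x ∈ P, ∀ y ∈ P, x ≠ y → ¬ G.Adj x y →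
    (x = u ∧ y = v) ∨ (x = v ∧ y = u)

/-- `P` is a supergraph of a prison in `G`: a 5-vertex set whose induced subgraph
contains a prison on `P` as a spanning subgraph, i.e. all non-adjacent pairs in `P`
are among two pairs sharing a common vertex. -/
def SupPrison (G : SimpleGraph V) (P : Set V) : Prop :=
  P.ncard = 5 ∧ ∃ w u v : V, ∀ x ∈ P, ∀ y ∈ P, x ≠ y → ¬ G.Adj x y →
    (({x, y} : Set V) = {w, u} ∨ ({x, y} : Set V) = {w, v})

/-- Hypothesis (H1): every edge of `G` that does not have both endpoints in `S`
is contained in a strict supergraph of a prison in `G`. -/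
def H1 (G : SimpleGraph V) (S : Set V) : Prop :=
  ∀ u v : V, G.Adj u v → ¬(u ∈ S ∧ v ∈ S) →
    ∃ P, StrictSupPrison G P ∧ u ∈ P ∧ v ∈ P

/-- Hypothesis (H2): every 5-vertex set inducing a prison in `G` contains at least
two edges with both endpoints in `S`. -/
def H2 (G : SimpleGraph V) (S : Set V) : Prop :=
  ∀ P, InducesPrison G P →
    ∃ e₁ e₂ : Sym2 V, e₁ ≠ e₂ ∧ e₁ ∈ edgesWithin G (P ∩ S) ∧ e₂ ∈ edgesWithin G (P ∩ S)

/-- `B`: the edges of `G−S` lying in no triangle of `G−S`. -/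
def BSet (G : SimpleGraph V) (S : Set V) : Set (Sym2 V) :=
  {e ∈ edgesWithin G Sᶜ | ¬ ∃ w ∈ Sᶜ, ∀ x ∈ e, G.Adj w x}

/-- `B_e` for the edge `e = ab` of `G[S]`: the edges of `B` both of whose endpoints
are adjacent in `G` to both `a` and `b`. -/
def BOf (G : SimpleGraph V) (S : Set V) (a b : V) : Set (Sym2 V) :=
  {f ∈ BSet G S | ∀ x ∈ f, G.Adj x a ∧ G.Adj x b}

/-- `V(B_e)`: the set of endpoints of the edges of `B_e`. -/
def BVerts (G : SimpleGraph V) (S : Set V) (a b : V) : Set V :=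
  {x | ∃ f ∈ BOf G S a b, x ∈ f}

/-- The graph `G ∪ A` obtained by adding the pairs in `A` as edges. -/
def addEdges (G : SimpleGraph V) (A : Set (Sym2 V)) : SimpleGraph V :=
  G ⊔ SimpleGraph.fromEdgeSet A

/-- `A` is a prison-free completion set for `G`: a set of non-edges (unordered
pairs of distinct vertices not adjacent in `G`) whose addition makes `G` prison-free. -/
def CompletionSet (G : SimpleGraph V) (A : Set (Sym2 V)) : Prop :=
  (∀ e ∈ A, ¬ e.IsDiag) ∧ (∀ e ∈ A, e ∉ G.edgeSet) ∧ PrisonFree (addEdges G A)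

/-- `A` is a minimal prison-free completion set for `G`. -/
def MinCompletionSet (G : SimpleGraph V) (A : Set (Sym2 V)) : Prop :=
  CompletionSet G A ∧ ∀ A' ⊂ A, ¬ CompletionSet G A'

/-- `A` is a solution to the instance `(G,k)` of Prison-Free Edge Completion:
a prison-free completion set of size at most `k`. -/
def Solution (G : SimpleGraph V) (k : ℕ) (A : Set (Sym2 V)) : Prop :=
  CompletionSet G A ∧ A.Finite ∧ A.ncard ≤ k

/-- `A` is a minimal solution to `(G,k)`: a solution no proper subset of which is a
prison-free completion set. -/
def MinSolution (G : SimpleGraph V) (k : ℕ) (A : Set (Sym2 V)) : Prop :=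
  Solution G k A ∧ ∀ A' ⊂ A, ¬ CompletionSet G A'

/-- `K` is a set of 4 vertices inducing a complete graph `K₄` in `G`. -/
def IsK4 (G : SimpleGraph V) (K : Set V) : Prop :=
  K.ncard = 4 ∧ ∀ u ∈ K, ∀ v ∈ K, u ≠ v → G.Adj u v

/-- The modulator property of the set `S` (output of the sunflower-based
Lemma): for every prison `P` in `G` and every edge set `A ⊆ E(G)` with `|A| ≤ k`,
if deleting `A` from `G[S]` yields a prison-free graph then `A` contains an edge
of `G[P]`. -/
def GoodModulator (G : SimpleGraph V) (k : ℕ) (S : Set V) : Prop :=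
  ∀ P : Set V, InducesPrison G P →
    ∀ A : Set (Sym2 V), A ⊆ G.edgeSet → A.Finite → A.ncard ≤ k →
      PrisonFree ((inducedOn G S).deleteEdges A) →
      ∃ e ∈ A, e ∈ edgesWithin G P

/-- Hypothesis (H3): for every `F' ∈ cmd₃(G−S)` and every inclusion-wise maximal
set `F ⊇ F'` such that `G[F]` is complete multipartite, some vertex outside `F`
has neighbours in at least two classes of `F`. -/
def H3 (G : SimpleGraph V) (S : Set V) : Prop :=
  ∀ F', Cmd G Sᶜ 3 F' → ∀ F : Set V, F' ⊆ F → CMP G F →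
    (∀ F'', F ⊆ F'' → CMP G F'' → F'' = F) →
    ∃ v ∉ F, ∃ P, IsCMP G F P ∧
      ∃ C ∈ P, ∃ D ∈ P, C ≠ D ∧ (∃ x ∈ C, G.Adj v x) ∧ ∃ y ∈ D, G.Adj v y

/-- `F` is an inclusion-wise maximal subset of `W` inducing a complete
multipartite subgraph of `G`. -/
def MaxCMPon (G : SimpleGraph V) (W F : Set V) : Prop :=
  F ⊆ W ∧ CMP G F ∧ ∀ F'', F'' ⊆ W → F ⊆ F'' → CMP G F'' → F'' = F

-- key lemma scratch
section Key
variable {V : Type*}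

lemma key_prison (G : SimpleGraph V) (S : Set V) (h2 : H2 G S)
    (a b : V) (ha : a ∈ S) (hb : b ∈ S) (hab : G.Adj a b)
    {x y z : V}
    (hx : x ∉ S ∧ G.Adj a x ∧ G.Adj b x)
    (hy : y ∉ S ∧ G.Adj a y ∧ G.Adj b y)
    (hz : z ∉ S ∧ G.Adj a z ∧ G.Adj b z)
    (hxy : ¬ G.Adj x y) (hyz : ¬ G.Adj y z)
    (hxy' : x ≠ y) (hyz' : y ≠ z) (hxz : G.Adj x z) : False := by
  obtain ⟨hxS, hax, hbx⟩ := hx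
  obtain ⟨hyS, hay, hby⟩ := hy
  obtain ⟨hzS, haz, hbz⟩ := hz
  have hax' := hax.symm; have hbx' := hbx.symm
  have hay' := hay.symm; have hby' := hby.symm
  have haz' := haz.symm; have hbz' := hbz.symm
  have hxz2 := hxz.symm
  have hba := hab.symm
  have hyx : ¬ G.Adj y x := fun h => hxy h.symm
  have hzy : ¬ G.Adj z y := fun h => hyz h.symm
  have hxz'' : x ≠ z := hxz.ne
  have hax0 : a ≠ x := fun h => hxS (h ▸ ha)
  have hay0 : a ≠ y := fun h => hyS (h ▸ ha)
  have haz0 : a ≠ z := fun h => hzS (h ▸ ha)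
  have hbx0 : b ≠ x := fun h => hxS (h ▸ hb)
  have hby0 : b ≠ y := fun h => hyS (h ▸ hb)
  have hbz0 : b ≠ z := fun h => hzS (h ▸ hb)
  have hab0 : a ≠ b := hab.ne
  let g : Fin 5 → V := ![a, b, x, z, y]
  have hg0 : g 0 = a := rfl
  have hg1 : g 1 = b := rfl
  have hg2 : g 2 = x := rfl
  have hg3 : g 3 = z := rfl
  have hg4 : g 4 = y := rfl
  have hinj : Function.Injective g := by
    intro i j hij
    fin_cases i <;> fin_cases j <;>
      simp_all [hg0, hg1, hg2, hg3, hg4]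
  have hadj : ∀ i j, G.Adj (g i) (g j) ↔ prison.Adj i j := by
    intro i j
    fin_cases i <;> fin_cases j <;>
      simp_all [hg0, hg1, hg2, hg3, hg4, prison]
  let f : Fin 5 ↪ V := ⟨g, hinj⟩
  obtain ⟨e₁, e₂, hne, he₁, he₂⟩ := h2 (Set.range f) ⟨f, rfl, hadj⟩
  have hmem : ∀ w, w ∈ Set.range f → w ∈ S → w = a ∨ w = b := by
    rintro w ⟨i, rfl⟩ hwS
    fin_cases i <;> simp_all [f, Function.Embedding.coeFn_mk, hg0, hg1, hg2, hg3, hg4]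
  have honly : ∀ e ∈ edgesWithin G (Set.range f ∩ S), e = s(a, b) := by
    intro e he
    induction e using Sym2.ind with
    | _ u v =>
      rw [edgesWithin, SimpleGraph.mem_edgeSet] at he
      obtain ⟨huv, ⟨hu1, hu2⟩, hv1, hv2⟩ := he
      have h1 := hmem u hu1 hu2
      have h2 := hmem v hv1 hv2
      have hne' : u ≠ v := huv.ne
      rcases h1 with rfl | rfl <;> rcases h2 with rfl | rfl
      · exact absurd rfl hne'
      · rfl
      · exact Sym2.eq_swap
      · exact absurd rfl hne'
  exact hne ((honly e₁ he₁).trans (honly e₂ he₂).symm)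

end Key
/-- Under (H1) and (H2), for every edge `ab` of `G[S]`, the set
`N(a) ∩ N(b) ∩ (V ∖ S)` induces a complete multipartite subgraph of `G`, and if
`B_{ab}` is nonempty, this induced subgraph is complete bipartite. -/
theorem common_neighbourhood_multipartite {V : Type*} [Fintype V]
    (G : SimpleGraph V) (S : Set V) (h1 : H1 G S) (h2 : H2 G S)
    (a b : V) (ha : a ∈ S) (hb : b ∈ S) (hab : G.Adj a b) :
    CMP G {x : V | x ∉ S ∧ G.Adj a x ∧ G.Adj b x} ∧
    ((BOf G S a b).Nonempty →
      ∃ C₁ C₂ : Set V, C₁ ≠ C₂ ∧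
        IsCMP G {x : V | x ∉ S ∧ G.Adj a x ∧ G.Adj b x} {C₁, C₂}) := by
  classical
  set F : Set V := {x : V | x ∉ S ∧ G.Adj a x ∧ G.Adj b x} with hFdef
  have hFmem : ∀ x, x ∈ F ↔ (x ∉ S ∧ G.Adj a x ∧ G.Adj b x) := fun x => Iff.rfl
  have htrans : ∀ x ∈ F, ∀ y ∈ F, ∀ z ∈ F,
      (x = y ∨ ¬ G.Adj x y) → (y = z ∨ ¬ G.Adj y z) → (x = z ∨ ¬ G.Adj x z) := by
    intro x hx y hy z hz hxy hyz
    by_cases exy : x = y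
    · subst exy; exact hyz
    by_cases eyz : y = z
    · subst eyz; exact hxy
    by_cases exz : x = z
    · exact Or.inl exz
    refine Or.inr fun hadj => ?_
    exact key_prison G S h2 a b ha hb hab ((hFmem x).1 hx) ((hFmem y).1 hy)
      ((hFmem z).1 hz) (hxy.resolve_left exy) (hyz.resolve_left eyz) exy eyz hadj
  have hsymm : ∀ x y : V, (x = y ∨ ¬ G.Adj x y) → (y = x ∨ ¬ G.Adj y x) := by
    rintro x y (rfl | h)
    · exact Or.inl rfl
    · exact Or.inr fun h' => h h'.symm
  set Cls : V → Set V := fun u => {w | w ∈ F ∧ (u = w ∨ ¬ G.Adj u w)} with hCls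
  have hmemCls : ∀ u w, w ∈ Cls u ↔ (w ∈ F ∧ (u = w ∨ ¬ G.Adj u w)) := fun _ _ => Iff.rfl
  have hself : ∀ u ∈ F, u ∈ Cls u := fun u hu => ⟨hu, Or.inl rfl⟩
  have hClsF : ∀ u, Cls u ⊆ F := fun u w hw => hw.1
  have heq : ∀ u ∈ F, ∀ w ∈ F, (u = w ∨ ¬ G.Adj u w) → Cls u = Cls w := by
    intro u hu w hw huw
    ext t
    simp only [hmemCls]
    constructor
    · rintro ⟨ht, hut⟩
      exact ⟨ht, htrans w hw u hu t ht (hsymm u w huw) hut⟩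
    · rintro ⟨ht, hwt⟩
      exact ⟨ht, htrans u hu w hw t ht huw hwt⟩
  have hcmp : ∀ P : Set (Set V), (∀ C ∈ P, ∃ u ∈ F, C = Cls u) →
      (∀ t ∈ F, ∃ C ∈ P, t ∈ C) → IsCMP G F P := by
    intro P hP hcov
    refine ⟨?_, ?_, ?_, ?_⟩
    · intro C hC
      obtain ⟨u, hu, rfl⟩ := hP C hC
      exact ⟨⟨u, hself u hu⟩, hClsF u⟩
    · apply Set.Subset.antisymm
      · intro t ht
        obtain ⟨C, hC, htC⟩ := ht
        obtain ⟨u, hu, rfl⟩ := hP C hC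
        exact hClsF u htC
      · intro t ht
        obtain ⟨C, hC, htC⟩ := hcov t ht
        exact ⟨C, hC, htC⟩
    · intro C hC D hD hCD
      obtain ⟨u, hu, rfl⟩ := hP C hC
      obtain ⟨w, hw, rfl⟩ := hP D hD
      rw [Set.disjoint_left]
      intro t htu htw
      refine hCD ?_
      obtain ⟨ht, hut⟩ := htu
      obtain ⟨_, hwt⟩ := htw
      exact heq u hu w hw (htrans u hu t ht w hw hut (hsymm w t hwt))
    · intro u hu v hv
      constructor
      · rintro hadj ⟨C, hC, huC, hvC⟩
        obtain ⟨t, ht, rfl⟩ := hP C hC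
        have h' : u = v ∨ ¬ G.Adj u v :=
          htrans u hu t ht v hv (hsymm t u huC.2) hvC.2
        rcases h' with rfl | h'
        · exact G.irrefl hadj
        · exact h' hadj
      · intro hnc
        by_contra hadj
        obtain ⟨C, hC, huC⟩ := hcov u hu
        obtain ⟨t, ht, rfl⟩ := hP C hC
        refine hnc ⟨Cls t, hC, huC, ?_⟩
        exact ⟨hv, htrans t ht u hu v hv huC.2 (Or.inr hadj)⟩
  constructor
  · refine ⟨Cls '' F, hcmp _ ?_ ?_⟩
    · rintro C ⟨u, hu, rfl⟩; exact ⟨u, hu, rfl⟩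
    · intro t ht; exact ⟨Cls t, ⟨t, ht, rfl⟩, hself t ht⟩
  · rintro ⟨e, he⟩
    induction e using Sym2.ind with
    | _ u v =>
      obtain ⟨heB, hadjall⟩ := he
      obtain ⟨heE, hnotri⟩ := heB
      rw [edgesWithin, SimpleGraph.mem_edgeSet] at heE
      obtain ⟨huv, huS, hvS⟩ := heE
      have hua := hadjall u (Sym2.mem_mk_left u v)
      have hva := hadjall v (Sym2.mem_mk_right u v)
      have huF : u ∈ F := ⟨huS, hua.1.symm, hua.2.symm⟩
      have hvF : v ∈ F := ⟨hvS, hva.1.symm, hva.2.symm⟩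
      have hcov : ∀ t ∈ F, t ∈ Cls u ∨ t ∈ Cls v := by
        intro t ht
        by_cases h1' : G.Adj u t
        · by_cases h2' : G.Adj v t
          · exfalso
            refine hnotri ⟨t, ht.1, ?_⟩
            intro x hx
            rw [Sym2.mem_iff] at hx
            rcases hx with rfl | rfl
            · exact h1'.symm
            · exact h2'.symm
          · exact Or.inr ⟨ht, Or.inr h2'⟩
        · exact Or.inl ⟨ht, Or.inr h1'⟩
      refine ⟨Cls u, Cls v, ?_, ?_⟩
      · intro hEq
        have hv' : v ∈ Cls u := hEq ▸ hself v hvF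
        rcases hv'.2 with rfl | h
        · exact G.irrefl huv
        · exact h huv
      · apply hcmp
        · rintro C (rfl | rfl)
          · exact ⟨u, huF, rfl⟩
          · exact ⟨v, hvF, rfl⟩
        · intro t ht
          rcases hcov t ht with h | h
          · exact ⟨Cls u, Or.inl rfl, h⟩
          · exact ⟨Cls v, Or.inr rfl, h⟩

end PrisonFreePaper
end

section
/- Let G be a graph and S⊆V(G) a set satisfying (H1) and (H2). Let e be an edge of G[S] with B_e nonempty. Then every supergraph of a prison P in G that contains an edge of B_e satisfies P ⊆ V(B_e) ∪ S, where V(B_e) denotes the set of endpoints of edges in B_e. -/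
namespace PrisonFreePaper

variable {V : Type*}

section Aux

lemma inducesPrison_of (G : SimpleGraph V) (v0 v1 v2 v3 v4 : V)
    (h01 : G.Adj v0 v1) (h02 : G.Adj v0 v2) (h03 : G.Adj v0 v3)
    (h12 : G.Adj v1 v2) (h13 : G.Adj v1 v3) (h23 : G.Adj v2 v3)
    (h40 : G.Adj v4 v0) (h41 : G.Adj v4 v1)
    (h42 : ¬ G.Adj v4 v2) (h43 : ¬ G.Adj v4 v3)
    (n42 : v4 ≠ v2) (n43 : v4 ≠ v3) :
    InducesPrison G {v0, v1, v2, v3, v4} := by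
  have n01 := h01.ne; have n02 := h02.ne; have n03 := h03.ne
  have n12 := h12.ne; have n13 := h13.ne; have n23 := h23.ne
  have n40 := h40.ne; have n41 := h41.ne
  refine ⟨⟨![v0, v1, v2, v3, v4], ?_⟩, ?_, ?_⟩
  · intro i j hij
    fin_cases i <;> fin_cases j <;>
      first
        | rfl
        | exact absurd hij n01 | exact absurd hij n01.symm
        | exact absurd hij n02 | exact absurd hij n02.symm
        | exact absurd hij n03 | exact absurd hij n03.symm
        | exact absurd hij n12 | exact absurd hij n12.symm
        | exact absurd hij n13 | exact absurd hij n13.symm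
        | exact absurd hij n23 | exact absurd hij n23.symm
        | exact absurd hij n40 | exact absurd hij n40.symm
        | exact absurd hij n41 | exact absurd hij n41.symm
        | exact absurd hij n42 | exact absurd hij n42.symm
        | exact absurd hij n43 | exact absurd hij n43.symm
  · ext x
    simp only [Function.Embedding.coeFn_mk, Set.mem_range, Set.mem_insert_iff,
      Set.mem_singleton_iff]
    constructor
    · rintro ⟨i, rfl⟩
      fin_cases i <;>
        first
          | exact Or.inl rfl
          | exact Or.inr (Or.inl rfl)
          | exact Or.inr (Or.inr (Or.inl rfl))
          | exact Or.inr (Or.inr (Or.inr (Or.inl rfl)))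
          | exact Or.inr (Or.inr (Or.inr (Or.inr rfl)))
    · rintro (rfl | rfl | rfl | rfl | rfl)
      exacts [⟨0, rfl⟩, ⟨1, rfl⟩, ⟨2, rfl⟩, ⟨3, rfl⟩, ⟨4, rfl⟩]
  · intro i j
    fin_cases i <;> fin_cases j <;>
      first
        | exact iff_of_false (G.irrefl) (fun hp => hp.1 rfl)
        | exact iff_of_false h42 (fun hp => hp.2 (Or.inl ⟨rfl, Or.inl rfl⟩))
        | exact iff_of_false h43 (fun hp => hp.2 (Or.inl ⟨rfl, Or.inr rfl⟩))
        | exact iff_of_false (fun h => h42 h.symm) (fun hp => hp.2 (Or.inr ⟨rfl, Or.inl rfl⟩))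
        | exact iff_of_false (fun h => h43 h.symm) (fun hp => hp.2 (Or.inr ⟨rfl, Or.inr rfl⟩))
        | exact iff_of_true h01 ⟨by decide, by decide⟩
        | exact iff_of_true h02 ⟨by decide, by decide⟩
        | exact iff_of_true h03 ⟨by decide, by decide⟩
        | exact iff_of_true h12 ⟨by decide, by decide⟩
        | exact iff_of_true h13 ⟨by decide, by decide⟩
        | exact iff_of_true h23 ⟨by decide, by decide⟩
        | exact iff_of_true h40 ⟨by decide, by decide⟩
        | exact iff_of_true h41 ⟨by decide, by decide⟩
        | exact iff_of_true h01.symm ⟨by decide, by decide⟩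
        | exact iff_of_true h02.symm ⟨by decide, by decide⟩
        | exact iff_of_true h03.symm ⟨by decide, by decide⟩
        | exact iff_of_true h12.symm ⟨by decide, by decide⟩
        | exact iff_of_true h13.symm ⟨by decide, by decide⟩
        | exact iff_of_true h23.symm ⟨by decide, by decide⟩
        | exact iff_of_true h40.symm ⟨by decide, by decide⟩
        | exact iff_of_true h41.symm ⟨by decide, by decide⟩

lemma h2_contra {G : SimpleGraph V} {S : Set V} (h2 : H2 G S)
    {Q : Set V} (hQ : InducesPrison G Q) (a b : V)
    (hup : ∀ u w : V, G.Adj u w → u ∈ Q → u ∈ S → w ∈ Q → w ∈ S → s(u, w) = s(a, b)) :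
    False := by
  obtain ⟨e₁, e₂, hne, he₁, he₂⟩ := h2 Q hQ
  have key : ∀ e, e ∈ edgesWithin G (Q ∩ S) → e = s(a, b) := by
    intro e
    refine Sym2.ind (fun u w => ?_) e
    intro he
    have h : (inducedOn G (Q ∩ S)).Adj u w := (SimpleGraph.mem_edgeSet _).mp he
    exact hup u w h.1 h.2.1.1 h.2.1.2 h.2.2.1 h.2.2.2
  exact hne ((key e₁ he₁).trans (key e₂ he₂).symm)

lemma h2_contra_two {G : SimpleGraph V} {S : Set V} (h2 : H2 G S)
    {Q : Set V} (hQ : InducesPrison G Q) (a b : V)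
    (hS : ∀ u, u ∈ Q → u ∈ S → u = a ∨ u = b) : False := by
  refine h2_contra h2 hQ a b ?_
  intro u w huv huQ huS hvQ hvS
  rcases hS u huQ huS with rfl | rfl <;> rcases hS w hvQ hvS with rfl | rfl
  · exact absurd huv (G.irrefl)
  · rfl
  · exact Sym2.eq_swap
  · exact absurd huv (G.irrefl)

lemma h2_contra_three {G : SimpleGraph V} {S : Set V} (h2 : H2 G S)
    {Q : Set V} (hQ : InducesPrison G Q) (a b x : V)
    (hS : ∀ u, u ∈ Q → u ∈ S → u = a ∨ u = b ∨ u = x)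
    (hax : ¬ G.Adj a x) (hbx : ¬ G.Adj b x) : False := by
  refine h2_contra h2 hQ a b ?_
  intro u w huv huQ huS hvQ hvS
  rcases hS u huQ huS with rfl | rfl | rfl <;> rcases hS w hvQ hvS with rfl | rfl | rfl
  · exact absurd huv (G.irrefl)
  · rfl
  · exact absurd huv hax
  · exact Sym2.eq_swap
  · exact absurd huv (G.irrefl)
  · exact absurd huv hbx
  · exact absurd huv.symm hax
  · exact absurd huv.symm hbx
  · exact absurd huv (G.irrefl)

lemma exists5 {V : Type*} [Fintype V] {P : Set V} (h5 : P.ncard = 5) (q1 q2 q3 q4 : V) :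
    ∃ x ∈ P, x ≠ q1 ∧ x ≠ q2 ∧ x ≠ q3 ∧ x ≠ q4 := by
  by_contra hc
  push_neg at hc
  have hsub : P ⊆ ({q1, q2, q3, q4} : Set V) := by
    intro p hp
    simp only [Set.mem_insert_iff, Set.mem_singleton_iff]
    by_cases e1 : p = q1
    · exact Or.inl e1
    by_cases e2 : p = q2
    · exact Or.inr (Or.inl e2)
    by_cases e3 : p = q3
    · exact Or.inr (Or.inr (Or.inl e3))
    exact Or.inr (Or.inr (Or.inr (hc p hp e1 e2 e3)))
  have i1 := Set.ncard_insert_le q1 ({q2, q3, q4} : Set V)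
  have i2 := Set.ncard_insert_le q2 ({q3, q4} : Set V)
  have i3 := Set.ncard_insert_le q3 ({q4} : Set V)
  have i4 := Set.ncard_singleton q4
  have hle := Set.ncard_le_ncard hsub (Set.toFinite _)
  rw [h5] at hle
  omega

/-- The key adjacency step: under the hypotheses, the vertex `z` must be adjacent to `a`. -/
lemma adj_z_a {G : SimpleGraph V} {S : Set V} (h2 : H2 G S)
    {a b c d z x : V}
    (ha : a ∈ S) (hb : b ∈ S) (hab : G.Adj a b)
    (hcd : G.Adj c d) (hcS : c ∉ S) (hdS : d ∉ S)
    (hca : G.Adj c a) (hcb : G.Adj c b) (hda : G.Adj d a) (hdb : G.Adj d b)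
    (hzS : z ∉ S) (hzc : G.Adj z c) (hzd : ¬ G.Adj z d) (nzd : z ≠ d)
    (hxS : x ∈ S) (hxc : G.Adj x c) (hxd : G.Adj x d) (hxz : G.Adj x z) :
    G.Adj z a := by
  by_contra hza
  have nza : z ≠ a := fun h => hzS (h ▸ ha)
  have nzb : z ≠ b := fun h => hzS (h ▸ hb)
  have hzb : ¬ G.Adj z b := by
    intro hzb
    exact h2_contra_two h2
      (inducesPrison_of G b c a d z hcb.symm hab.symm hdb.symm hca hcd hda.symm
        hzb hzc hza hzd nza nzd) a b
      (by intro u' hu' hs'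
          simp only [Set.mem_insert_iff, Set.mem_singleton_iff] at hu'
          rcases hu' with rfl | rfl | rfl | rfl | rfl <;> tauto)
  have nxa : x ≠ a := fun h => hza ((h ▸ hxz).symm)
  have nxb : x ≠ b := fun h => hzb ((h ▸ hxz).symm)
  have hax : ¬ G.Adj a x := by
    intro hax
    exact h2_contra_two h2
      (inducesPrison_of G c x a d z hxc.symm hca hcd hax.symm hxd hda.symm
        hzc hxz.symm hza hzd nza nzd) a x
      (by intro u' hu' hs'
          simp only [Set.mem_insert_iff, Set.mem_singleton_iff] at hu'
          rcases hu' with rfl | rfl | rfl | rfl | rfl <;> tauto)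
  have hbx : ¬ G.Adj b x := by
    intro hbx
    exact h2_contra_two h2
      (inducesPrison_of G c x b d z hxc.symm hcb hcd hbx.symm hxd hdb.symm
        hzc hxz.symm hzb hzd nzb nzd) b x
      (by intro u' hu' hs'
          simp only [Set.mem_insert_iff, Set.mem_singleton_iff] at hu'
          rcases hu' with rfl | rfl | rfl | rfl | rfl <;> tauto)
  exact h2_contra_three h2
    (inducesPrison_of G c d a b x hcd hca hcb hda hdb hab hxc hxd
      (fun h => hax h.symm) (fun h => hbx h.symm) nxa nxb) a b x
    (by intro u' hu' hs'
        simp only [Set.mem_insert_iff, Set.mem_singleton_iff] at hu'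
        rcases hu' with rfl | rfl | rfl | rfl | rfl <;> tauto)
    hax hbx

lemma edge_mem_BOf {G : SimpleGraph V} {S : Set V} (h2 : H2 G S)
    {a b c d z x : V}
    (ha : a ∈ S) (hb : b ∈ S) (hab : G.Adj a b)
    (hcd : G.Adj c d) (hcS : c ∉ S) (hdS : d ∉ S)
    (hntri : ∀ t, t ∉ S → G.Adj t c → G.Adj t d → False)
    (hca : G.Adj c a) (hcb : G.Adj c b) (hda : G.Adj d a) (hdb : G.Adj d b)
    (hzS : z ∉ S) (hzc : G.Adj z c) (hzd : ¬ G.Adj z d) (nzd : z ≠ d)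
    (hxS : x ∈ S) (hxc : G.Adj x c) (hxd : G.Adj x d) (hxz : G.Adj x z) :
    s(z, c) ∈ BOf G S a b := by
  have hza : G.Adj z a :=
    adj_z_a h2 ha hb hab hcd hcS hdS hca hcb hda hdb hzS hzc hzd nzd hxS hxc hxd hxz
  have hzb : G.Adj z b :=
    adj_z_a h2 hb ha hab.symm hcd hcS hdS hcb hca hdb hda hzS hzc hzd nzd hxS hxc hxd hxz
  have htri : ∀ t, t ∉ S → G.Adj t z → G.Adj t c → False := by
    intro t htS htz htc
    have htd : ¬ G.Adj t d := fun h => hntri t htS htc h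
    have ntd : t ≠ d := fun h => hzd ((h ▸ htz).symm)
    have nta : t ≠ a := fun h => htS (h ▸ ha)
    have ntb : t ≠ b := fun h => htS (h ▸ hb)
    by_cases hta : G.Adj t a
    · by_cases htb : G.Adj t b
      · exact h2_contra_two h2
          (inducesPrison_of G a b z t d hab hza.symm hta.symm hzb.symm htb.symm htz.symm
            hda hdb (fun h => hzd h.symm) (fun h => htd h.symm) (Ne.symm nzd)
            (fun h => ntd h.symm)) a b
          (by intro u' hu' hs'
              simp only [Set.mem_insert_iff, Set.mem_singleton_iff] at hu'
              rcases hu' with rfl | rfl | rfl | rfl | rfl <;> tauto)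
      · exact h2_contra_two h2
          (inducesPrison_of G a c b d t hca.symm hab hda.symm hcb hcd hdb.symm
            hta htc htb htd ntb ntd) a b
          (by intro u' hu' hs'
              simp only [Set.mem_insert_iff, Set.mem_singleton_iff] at hu'
              rcases hu' with rfl | rfl | rfl | rfl | rfl <;> tauto)
    · by_cases htb : G.Adj t b
      · exact h2_contra_two h2
          (inducesPrison_of G b c a d t hcb.symm hab.symm hdb.symm hca hcd hda.symm
            htb htc hta htd nta ntd) a b
          (by intro u' hu' hs'
              simp only [Set.mem_insert_iff, Set.mem_singleton_iff] at hu'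
              rcases hu' with rfl | rfl | rfl | rfl | rfl <;> tauto)
      · exact h2_contra_two h2
          (inducesPrison_of G z c a b t hzc hza hzb hca hcb hab
            htz htc hta htb nta ntb) a b
          (by intro u' hu' hs'
              simp only [Set.mem_insert_iff, Set.mem_singleton_iff] at hu'
              rcases hu' with rfl | rfl | rfl | rfl | rfl <;> tauto)
  refine ⟨⟨(SimpleGraph.mem_edgeSet _).mpr ⟨hzc, hzS, hcS⟩, ?_⟩, ?_⟩
  · rintro ⟨t, htS, hall⟩
    exact htri t htS (hall z (Sym2.mem_mk_left z c)) (hall c (Sym2.mem_mk_right z c))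
  · intro y hy
    rcases Sym2.mem_iff.mp hy with rfl | rfl
    · exact ⟨hza, hzb⟩
    · exact ⟨hca, hcb⟩

end Aux

/-- Under (H1) and (H2), if `B_e` is nonempty for the edge
`e = ab` of `G[S]`, then every supergraph of a prison in `G` containing an edge of
`B_e` is contained in `V(B_e) ∪ S`. -/
theorem noCrossPrison2 {V : Type*} [Fintype V] (G : SimpleGraph V)
    (S : Set V) (h1 : H1 G S) (h2 : H2 G S)
    (a b : V) (ha : a ∈ S) (hb : b ∈ S) (hab : G.Adj a b)
    (hne : (BOf G S a b).Nonempty)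
    (P : Set V) (hP : SupPrison G P)
    (hedge : ∃ f ∈ BOf G S a b, ∀ x ∈ f, x ∈ P) :
    P ⊆ BVerts G S a b ∪ S := by
  obtain ⟨h5, w, u, v, hmiss⟩ := hP
  obtain ⟨f0, hf0, hf0P⟩ := hedge
  revert hf0 hf0P
  refine Sym2.ind (fun c d => ?_) f0
  intro hf0 hf0P
  obtain ⟨⟨hew, hntri0⟩, hadj⟩ := id hf0
  have hcd' : (inducedOn G Sᶜ).Adj c d := (SimpleGraph.mem_edgeSet _).mp hew
  have hcd : G.Adj c d := hcd'.1
  have hcS : c ∉ S := hcd'.2.1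
  have hdS : d ∉ S := hcd'.2.2
  have hntri : ∀ t, t ∉ S → G.Adj t c → G.Adj t d → False := by
    intro t h1' h2' h3'
    exact hntri0 ⟨t, h1', by
      intro y hy
      rcases Sym2.mem_iff.mp hy with rfl | rfl
      exacts [h2', h3']⟩
  have hca : G.Adj c a := (hadj c (Sym2.mem_mk_left c d)).1
  have hcb : G.Adj c b := (hadj c (Sym2.mem_mk_left c d)).2
  have hda : G.Adj d a := (hadj d (Sym2.mem_mk_right c d)).1
  have hdb : G.Adj d b := (hadj d (Sym2.mem_mk_right c d)).2
  have hcP : c ∈ P := hf0P c (Sym2.mem_mk_left c d)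
  have hdP : d ∈ P := hf0P d (Sym2.mem_mk_right c d)
  have ncd : c ≠ d := hcd.ne
  intro z hzP
  by_cases hzS : z ∈ S
  · exact Or.inr hzS
  by_cases ezc : z = c
  · exact Or.inl ⟨s(c, d), hf0, ezc ▸ Sym2.mem_mk_left c d⟩
  by_cases ezd : z = d
  · exact Or.inl ⟨s(c, d), hf0, ezd ▸ Sym2.mem_mk_right c d⟩
  by_cases hAzc : G.Adj z c <;> by_cases hAzd : G.Adj z d
  · exact absurd (hntri z hzS hAzc hAzd) not_false
  · -- z ~ c, z ≁ d : find box-vertex x and conclude s(z,c) ∈ B_e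
    have hm := hmiss z hzP d hdP ezd hAzd
    obtain ⟨r, hcov⟩ : ∃ r, ∀ x y, x ∈ P → y ∈ P → x ≠ y → ¬ G.Adj x y →
        x = z ∨ x = d ∨ x = r := by
      rcases hm with hm | hm
      · refine ⟨v, fun x y hx hy hxy hnadj => ?_⟩
        rcases hmiss x hx y hy hxy hnadj with h | h
        · have hx' : x ∈ ({w, u} : Set V) := by
            rw [← h]; exact Set.mem_insert x {y}
          rw [← hm] at hx'
          simp only [Set.mem_insert_iff, Set.mem_singleton_iff] at hx'
          tauto
        · have hx' : x ∈ ({w, v} : Set V) := by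
            rw [← h]; exact Set.mem_insert x {y}
          have hw : w ∈ ({z, d} : Set V) := by
            rw [hm]; exact Set.mem_insert w {u}
          simp only [Set.mem_insert_iff, Set.mem_singleton_iff] at hx' hw
          rcases hx' with rfl | rfl
          · tauto
          · tauto
      · refine ⟨u, fun x y hx hy hxy hnadj => ?_⟩
        rcases hmiss x hx y hy hxy hnadj with h | h
        · have hx' : x ∈ ({w, u} : Set V) := by
            rw [← h]; exact Set.mem_insert x {y}
          have hw : w ∈ ({z, d} : Set V) := by
            rw [hm]; exact Set.mem_insert w {v}
          simp only [Set.mem_insert_iff, Set.mem_singleton_iff] at hx' hw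
          rcases hx' with rfl | rfl
          · tauto
          · tauto
        · have hx' : x ∈ ({w, v} : Set V) := by
            rw [← h]; exact Set.mem_insert x {y}
          rw [← hm] at hx'
          simp only [Set.mem_insert_iff, Set.mem_singleton_iff] at hx'
          tauto
    obtain ⟨x, hxP, nxc, nxd, nxz, nxr⟩ := exists5 h5 c d z r
    have hxadj : ∀ p, p ∈ P → x ≠ p → G.Adj x p := by
      intro p hp np
      by_contra hnadj
      rcases hcov x p hxP hp np hnadj with h | h | h
      exacts [nxz h, nxd h, nxr h]
    have hxc := hxadj c hcP nxc
    have hxd := hxadj d hdP nxd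
    have hxz := hxadj z hzP nxz
    have hxS : x ∈ S := by
      by_contra hxS
      exact hntri x hxS hxc hxd
    exact Or.inl ⟨s(z, c),
      edge_mem_BOf h2 ha hb hab hcd hcS hdS hntri hca hcb hda hdb hzS hAzc hAzd ezd
        hxS hxc hxd hxz, Sym2.mem_mk_left z c⟩
  · -- z ≁ c, z ~ d : symmetric, conclude s(z,d) ∈ B_e
    have hm := hmiss z hzP c hcP ezc hAzc
    obtain ⟨r, hcov⟩ : ∃ r, ∀ x y, x ∈ P → y ∈ P → x ≠ y → ¬ G.Adj x y →
        x = z ∨ x = c ∨ x = r := by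
      rcases hm with hm | hm
      · refine ⟨v, fun x y hx hy hxy hnadj => ?_⟩
        rcases hmiss x hx y hy hxy hnadj with h | h
        · have hx' : x ∈ ({w, u} : Set V) := by
            rw [← h]; exact Set.mem_insert x {y}
          rw [← hm] at hx'
          simp only [Set.mem_insert_iff, Set.mem_singleton_iff] at hx'
          tauto
        · have hx' : x ∈ ({w, v} : Set V) := by
            rw [← h]; exact Set.mem_insert x {y}
          have hw : w ∈ ({z, c} : Set V) := by
            rw [hm]; exact Set.mem_insert w {u}
          simp only [Set.mem_insert_iff, Set.mem_singleton_iff] at hx' hw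
          rcases hx' with rfl | rfl
          · tauto
          · tauto
      · refine ⟨u, fun x y hx hy hxy hnadj => ?_⟩
        rcases hmiss x hx y hy hxy hnadj with h | h
        · have hx' : x ∈ ({w, u} : Set V) := by
            rw [← h]; exact Set.mem_insert x {y}
          have hw : w ∈ ({z, c} : Set V) := by
            rw [hm]; exact Set.mem_insert w {v}
          simp only [Set.mem_insert_iff, Set.mem_singleton_iff] at hx' hw
          rcases hx' with rfl | rfl
          · tauto
          · tauto
        · have hx' : x ∈ ({w, v} : Set V) := by
            rw [← h]; exact Set.mem_insert x {y}
          rw [← hm] at hx'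
          simp only [Set.mem_insert_iff, Set.mem_singleton_iff] at hx'
          tauto
    obtain ⟨x, hxP, nxc, nxd, nxz, nxr⟩ := exists5 h5 c d z r
    have hxadj : ∀ p, p ∈ P → x ≠ p → G.Adj x p := by
      intro p hp np
      by_contra hnadj
      rcases hcov x p hxP hp np hnadj with h | h | h
      exacts [nxz h, nxc h, nxr h]
    have hxc := hxadj c hcP nxc
    have hxd := hxadj d hdP nxd
    have hxz := hxadj z hzP nxz
    have hxS : x ∈ S := by
      by_contra hxS
      exact hntri x hxS hxc hxd
    exact Or.inl ⟨s(z, d),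
      edge_mem_BOf h2 ha hb hab hcd.symm hdS hcS (fun t h1' h2' h3' => hntri t h1' h3' h2')
        hda hdb hca hcb hzS hAzd hAzc ezc hxS hxd hxc hxz, Sym2.mem_mk_left z d⟩
  · -- z ≁ c and z ≁ d : impossible
    exfalso
    have hm1 := hmiss z hzP c hcP ezc hAzc
    have hm2 := hmiss z hzP d hdP ezd hAzd
    have hne_pairs : ({z, c} : Set V) ≠ ({z, d} : Set V) := by
      intro h
      have hc' : c ∈ ({z, d} : Set V) := by
        rw [← h]; exact Set.mem_insert_of_mem z rfl
      simp only [Set.mem_insert_iff, Set.mem_singleton_iff] at hc'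
      rcases hc' with h' | h'
      · exact ezc h'.symm
      · exact ncd h'
    have hpair : ∀ x y, x ∈ P → y ∈ P → x ≠ y → ¬ G.Adj x y →
        (({x, y} : Set V) = {z, c} ∨ ({x, y} : Set V) = {z, d}) := by
      intro x y hx hy hxy hn
      rcases hmiss x hx y hy hxy hn with h | h <;> rcases hm1 with h1 | h1 <;>
        rcases hm2 with h2 | h2 <;>
        first
          | exact Or.inl (h.trans h1.symm)
          | exact Or.inr (h.trans h2.symm)
          | exact absurd (h1.trans h2.symm) hne_pairs
    obtain ⟨x, hxP, nxc, nxd, nxz, _⟩ := exists5 h5 c d z z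
    obtain ⟨y, hyP, nyc, nyd, nyz, nyx⟩ := exists5 h5 c d z x
    have hadjall : ∀ x', x' ∈ P → x' ≠ c → x' ≠ d → x' ≠ z →
        ∀ p, p ∈ P → x' ≠ p → G.Adj x' p := by
      intro x' hx' nc' nd' nz' p hp np
      by_contra hn
      rcases hpair x' p hx' hp np hn with h | h
      · have hx'' : x' ∈ ({z, c} : Set V) := by
          rw [← h]; exact Set.mem_insert x' {p}
        simp only [Set.mem_insert_iff, Set.mem_singleton_iff] at hx''
        tauto
      · have hx'' : x' ∈ ({z, d} : Set V) := by
          rw [← h]; exact Set.mem_insert x' {p}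
        simp only [Set.mem_insert_iff, Set.mem_singleton_iff] at hx''
        tauto
    have hxc := hadjall x hxP nxc nxd nxz c hcP nxc
    have hxd := hadjall x hxP nxc nxd nxz d hdP nxd
    have hxz := hadjall x hxP nxc nxd nxz z hzP nxz
    have hxy := hadjall x hxP nxc nxd nxz y hyP (Ne.symm nyx)
    have hyc := hadjall y hyP nyc nyd nyz c hcP nyc
    have hyd := hadjall y hyP nyc nyd nyz d hdP nyd
    have hyz := hadjall y hyP nyc nyd nyz z hzP nyz
    exact h2_contra_two h2
      (inducesPrison_of G x y c d z hxy hxc hxd hyc hyd hcd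
        hxz.symm hyz.symm hAzc hAzd ezc ezd) x y
      (by intro u' hu' hs'
          simp only [Set.mem_insert_iff, Set.mem_singleton_iff] at hu'
          rcases hu' with rfl | rfl | rfl | rfl | rfl <;> tauto)


end PrisonFreePaper
end

section
/- Let G be a graph, S⊆V(G), and F'∈cmd_3(G−S). Suppose F⊆V(G) is an inclusion-wise maximal set such that G[F] is complete multipartite, F⊇F', and every vertex v∈V(G)∖F has neighbors in at most one class of F. Then for every k∈ℕ: (G,k) is a yes-instance of Prison-Free Edge Deletion if and only if (G', k) is a yes-instance, where G' is obtained from G by deleting all edges of G[F]. -/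
namespace PrisonFreePaper

variable {V : Type*}

/-! ### Auxiliary machinery for Statement 16 -/

section Aux

variable {G : SimpleGraph V} {F : Set V} {Pc : Set (Set V)}

/-- Two vertices lie in a common class of `Pc`. -/
def Same (Pc : Set (Set V)) (u v : V) : Prop := ∃ C ∈ Pc, u ∈ C ∧ v ∈ C

lemma Same.symm' {u v : V} (h : Same Pc u v) : Same Pc v u := by
  obtain ⟨C, hC, hu, hv⟩ := h; exact ⟨C, hC, hv, hu⟩

lemma cmp_adj_iff (hP : IsCMP G F Pc) {u v : V} (hu : u ∈ F) (hv : v ∈ F) :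
    G.Adj u v ↔ ¬ Same Pc u v := hP.2.2.2 u hu v hv

lemma same_trans (hP : IsCMP G F Pc) {u v w : V}
    (h1 : Same Pc u v) (h2 : Same Pc v w) : Same Pc u w := by
  obtain ⟨C, hC, hu, hv⟩ := h1
  obtain ⟨D, hD, hv', hw⟩ := h2
  have hCD : C = D := by
    by_contra hne
    exact Set.disjoint_left.mp (hP.2.2.1 C hC D hD hne) hv hv'
  exact ⟨C, hC, hu, by rw [hCD]; exact hw⟩

lemma mem_class (hP : IsCMP G F Pc) {u : V} (hu : u ∈ F) : ∃ C ∈ Pc, u ∈ C :=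
  Set.mem_sUnion.mp (hP.2.1.symm ▸ hu)

lemma key1 (hP : IsCMP G F Pc) (hmeet : ∀ v ∉ F, MeetsAtMostOneClass G Pc v)
    {v x y : V} (hv : v ∉ F) (hx : x ∈ F) (hy : y ∈ F)
    (hvx : G.Adj v x) (hvy : G.Adj v y) : Same Pc x y := by
  obtain ⟨C, hC, hxC⟩ := mem_class hP hx
  obtain ⟨D, hD, hyD⟩ := mem_class hP hy
  have hCD : C = D := hmeet v hv C hC D hD ⟨x, hxC, hvx⟩ ⟨y, hyD, hvy⟩
  exact ⟨C, hC, hxC, by rw [hCD]; exact hyD⟩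

lemma mem_edgesWithin {u v : V} :
    s(u, v) ∈ edgesWithin G F ↔ G.Adj u v ∧ u ∈ F ∧ v ∈ F := by
  show s(u, v) ∈ (inducedOn G F).edgeSet ↔ _
  rw [SimpleGraph.mem_edgeSet]
  exact Iff.rfl

/-- Structural lemma (a): in an induced prison of `G`, any two prison vertices
belonging to `F` lie in a common class (in particular are non-adjacent). -/
lemma noFEdge (hP : IsCMP G F Pc) (hmeet : ∀ v ∉ F, MeetsAtMostOneClass G Pc v)
    (f : Fin 5 ↪ V) (hf : ∀ a b, G.Adj (f a) (f b) ↔ prison.Adj a b) :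
    ∀ i j : Fin 5, f i ∈ F → f j ∈ F → Same Pc (f i) (f j) := by
  have pa : ∀ a b : Fin 5,
      (a ≠ b ∧ ¬((a = 4 ∧ (b = 2 ∨ b = 3)) ∨ (b = 4 ∧ (a = 2 ∨ a = 3)))) →
      prison.Adj a b := fun _ _ h => h
  have pn : ∀ a b : Fin 5,
      ¬(a ≠ b ∧ ¬((a = 4 ∧ (b = 2 ∨ b = 3)) ∨ (b = 4 ∧ (a = 2 ∨ a = 3)))) →
      ¬ prison.Adj a b := fun _ _ h => h
  have adjNS : ∀ a b : Fin 5, prison.Adj a b → f a ∈ F → f b ∈ F →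
      ¬ Same Pc (f a) (f b) :=
    fun a b hp ha hb => (cmp_adj_iff hP ha hb).mp ((hf a b).mpr hp)
  have nonadjS : ∀ a b : Fin 5, ¬ prison.Adj a b → f a ∈ F → f b ∈ F →
      Same Pc (f a) (f b) := by
    intro a b hnp ha hb
    by_contra hs
    exact hnp ((hf a b).mp ((cmp_adj_iff hP ha hb).mpr hs))
  have step : ∀ m i j : Fin 5, prison.Adj m i → prison.Adj m j → f i ∈ F → f j ∈ F →
      ¬ Same Pc (f i) (f j) → f m ∈ F := by
    intro m i j h1 h2 hi hj hs
    by_contra hm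
    exact hs (key1 hP hmeet hm hi hj ((hf m i).mpr h1) ((hf m j).mpr h2))
  have pair01 : f 0 ∈ F → f 1 ∈ F → ¬ Same Pc (f 0) (f 1) → False := by
    intro h0 h1 hns
    have h2 := step 2 0 1 (pa 2 0 (by decide)) (pa 2 1 (by decide)) h0 h1 hns
    have h3 := step 3 0 1 (pa 3 0 (by decide)) (pa 3 1 (by decide)) h0 h1 hns
    have h4 := step 4 0 1 (pa 4 0 (by decide)) (pa 4 1 (by decide)) h0 h1 hns
    have s42 := nonadjS 4 2 (pn 4 2 (by decide)) h4 h2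
    have s43 := nonadjS 4 3 (pn 4 3 (by decide)) h4 h3
    exact adjNS 2 3 (pa 2 3 (by decide)) h2 h3 (same_trans hP s42.symm' s43)
  intro i j hi hj
  by_contra hs
  have hp : prison.Adj i j := (hf i j).mp ((cmp_adj_iff hP hi hj).mpr hs)
  have ns01 : f 0 ∈ F → f 1 ∈ F → False := by
    intro h0 h1
    exact pair01 h0 h1 (adjNS 0 1 (pa 0 1 (by decide)) h0 h1)
  fin_cases i <;> fin_cases j
  -- i = 0
  · exact absurd hp (pn _ _ (by decide))
  · exact pair01 hi hj hs
  · exact ns01 hi (step 1 0 2 (pa 1 0 (by decide)) (pa 1 2 (by decide)) hi hj hs)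
  · exact ns01 hi (step 1 0 3 (pa 1 0 (by decide)) (pa 1 3 (by decide)) hi hj hs)
  · exact ns01 hi (step 1 0 4 (pa 1 0 (by decide)) (pa 1 4 (by decide)) hi hj hs)
  -- i = 1
  · exact pair01 hj hi (fun h => hs h.symm')
  · exact absurd hp (pn _ _ (by decide))
  · exact ns01 (step 0 1 2 (pa 0 1 (by decide)) (pa 0 2 (by decide)) hi hj hs) hi
  · exact ns01 (step 0 1 3 (pa 0 1 (by decide)) (pa 0 3 (by decide)) hi hj hs) hi
  · exact ns01 (step 0 1 4 (pa 0 1 (by decide)) (pa 0 4 (by decide)) hi hj hs) hi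
  -- i = 2
  · exact ns01 hj (step 1 2 0 (pa 1 2 (by decide)) (pa 1 0 (by decide)) hi hj hs)
  · exact ns01 (step 0 2 1 (pa 0 2 (by decide)) (pa 0 1 (by decide)) hi hj hs) hj
  · exact absurd hp (pn _ _ (by decide))
  · exact ns01 (step 0 2 3 (pa 0 2 (by decide)) (pa 0 3 (by decide)) hi hj hs)
      (step 1 2 3 (pa 1 2 (by decide)) (pa 1 3 (by decide)) hi hj hs)
  · exact absurd hp (pn _ _ (by decide))
  -- i = 3
  · exact ns01 hj (step 1 3 0 (pa 1 3 (by decide)) (pa 1 0 (by decide)) hi hj hs)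
  · exact ns01 (step 0 3 1 (pa 0 3 (by decide)) (pa 0 1 (by decide)) hi hj hs) hj
  · exact ns01 (step 0 3 2 (pa 0 3 (by decide)) (pa 0 2 (by decide)) hi hj hs)
      (step 1 3 2 (pa 1 3 (by decide)) (pa 1 2 (by decide)) hi hj hs)
  · exact absurd hp (pn _ _ (by decide))
  · exact absurd hp (pn _ _ (by decide))
  -- i = 4
  · exact ns01 hj (step 1 4 0 (pa 1 4 (by decide)) (pa 1 0 (by decide)) hi hj hs)
  · exact ns01 (step 0 4 1 (pa 0 4 (by decide)) (pa 0 1 (by decide)) hi hj hs) hj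
  · exact absurd hp (pn _ _ (by decide))
  · exact absurd hp (pn _ _ (by decide))
  · exact absurd hp (pn _ _ (by decide))

/-- Structural lemma (b): in an induced prison of `G` minus all `F`-internal
edges, any two prison vertices belonging to `F` lie in a common class of `Pc`. -/
lemma noFEdge' (hP : IsCMP G F Pc) (hmeet : ∀ v ∉ F, MeetsAtMostOneClass G Pc v)
    (f : Fin 5 ↪ V)
    (hf : ∀ a b, (G.deleteEdges (edgesWithin G F)).Adj (f a) (f b) ↔ prison.Adj a b) :
    ∀ i j : Fin 5, f i ∈ F → f j ∈ F → Same Pc (f i) (f j) := by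
  have pa : ∀ a b : Fin 5,
      (a ≠ b ∧ ¬((a = 4 ∧ (b = 2 ∨ b = 3)) ∨ (b = 4 ∧ (a = 2 ∨ a = 3)))) →
      prison.Adj a b := fun _ _ h => h
  have pn : ∀ a b : Fin 5,
      ¬(a ≠ b ∧ ¬((a = 4 ∧ (b = 2 ∨ b = 3)) ∨ (b = 4 ∧ (a = 2 ∨ a = 3)))) →
      ¬ prison.Adj a b := fun _ _ h => h
  intro i j hi hj
  by_contra hs
  have hadj : G.Adj (f i) (f j) := (cmp_adj_iff hP hi hj).mpr hs
  have hmem : s(f i, f j) ∈ edgesWithin G F := mem_edgesWithin.mpr ⟨hadj, hi, hj⟩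
  have hnd : ¬ (G.deleteEdges (edgesWithin G F)).Adj (f i) (f j) := by
    rw [SimpleGraph.deleteEdges_adj]
    exact fun h => h.2 hmem
  have hnp : ¬ prison.Adj i j := fun hp => hnd ((hf i j).mpr hp)
  -- the outside-vertex argument, used for the four surviving cases
  have solve : ∀ m a b : Fin 5, prison.Adj m a → prison.Adj m b → f a ∈ F → f b ∈ F →
      Same Pc (f a) (f b) := by
    intro m a b h1 h2 ha hb
    have hma := (hf m a).mpr h1
    have hmb := (hf m b).mpr h2
    have hGma := (SimpleGraph.deleteEdges_adj.mp hma).1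
    have hGmb := (SimpleGraph.deleteEdges_adj.mp hmb).1
    have hmF : f m ∉ F := by
      intro hmF
      exact (SimpleGraph.deleteEdges_adj.mp hma).2
        (mem_edgesWithin.mpr ⟨hGma, hmF, ha⟩)
    exact key1 hP hmeet hmF ha hb hGma hGmb
  have hloop : ¬ G.Adj (f i) (f i) := fun h => G.irrefl h
  fin_cases i <;> fin_cases j
  · exact hloop hadj
  · exact hnp (pa 0 1 (by decide))
  · exact hnp (pa 0 2 (by decide))
  · exact hnp (pa 0 3 (by decide))
  · exact hnp (pa 0 4 (by decide))
  · exact hnp (pa 1 0 (by decide))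
  · exact hloop hadj
  · exact hnp (pa 1 2 (by decide))
  · exact hnp (pa 1 3 (by decide))
  · exact hnp (pa 1 4 (by decide))
  · exact hnp (pa 2 0 (by decide))
  · exact hnp (pa 2 1 (by decide))
  · exact hloop hadj
  · exact hnp (pa 2 3 (by decide))
  · exact hs (solve 0 2 4 (pa 0 2 (by decide)) (pa 0 4 (by decide)) hi hj)
  · exact hnp (pa 3 0 (by decide))
  · exact hnp (pa 3 1 (by decide))
  · exact hnp (pa 3 2 (by decide))
  · exact hloop hadj
  · exact hs (solve 0 3 4 (pa 0 3 (by decide)) (pa 0 4 (by decide)) hi hj)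
  · exact hnp (pa 4 0 (by decide))
  · exact hnp (pa 4 1 (by decide))
  · exact hs (solve 0 4 2 (pa 0 4 (by decide)) (pa 0 2 (by decide)) hi hj)
  · exact hs (solve 0 4 3 (pa 0 4 (by decide)) (pa 0 3 (by decide)) hi hj)
  · exact hloop hadj

/-- Transfer (1): a prison of `G` remains a prison after deleting any set of
`F`-internal edges. -/
lemma transfer1 (hP : IsCMP G F Pc) (hmeet : ∀ v ∉ F, MeetsAtMostOneClass G Pc v)
    {D : Set (Sym2 V)} (hD : D ⊆ edgesWithin G F) {Q : Set V}
    (h : InducesPrison G Q) : InducesPrison (G.deleteEdges D) Q := by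
  obtain ⟨f, hr, hf⟩ := h
  refine ⟨f, hr, fun a b => ?_⟩
  constructor
  · intro h'
    exact (hf a b).mp (SimpleGraph.deleteEdges_adj.mp h').1
  · intro hp
    have hadj := (hf a b).mpr hp
    rw [SimpleGraph.deleteEdges_adj]
    refine ⟨hadj, fun hmem => ?_⟩
    obtain ⟨_, haF, hbF⟩ := mem_edgesWithin.mp (hD hmem)
    exact (cmp_adj_iff hP haF hbF).mp hadj (noFEdge hP hmeet f hf a b haF hbF)

/-- Transfer (2): a prison of `G` minus all `F`-internal edges is a prison of `G`
minus any subset of the `F`-internal edges. -/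
lemma transfer2 (hP : IsCMP G F Pc) (hmeet : ∀ v ∉ F, MeetsAtMostOneClass G Pc v)
    {D : Set (Sym2 V)} (hD : D ⊆ edgesWithin G F) {Q : Set V}
    (h : InducesPrison (G.deleteEdges (edgesWithin G F)) Q) :
    InducesPrison (G.deleteEdges D) Q := by
  obtain ⟨f, hr, hf⟩ := h
  refine ⟨f, hr, fun a b => ?_⟩
  constructor
  · intro h'
    obtain ⟨hG, hnD⟩ := SimpleGraph.deleteEdges_adj.mp h'
    by_contra hnp
    have hmemE : s(f a, f b) ∈ edgesWithin G F := by
      by_contra hne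
      exact hnp ((hf a b).mp (SimpleGraph.deleteEdges_adj.mpr ⟨hG, hne⟩))
    obtain ⟨_, haF, hbF⟩ := mem_edgesWithin.mp hmemE
    exact (cmp_adj_iff hP haF hbF).mp hG (noFEdge' hP hmeet f hf a b haF hbF)
  · intro hp
    obtain ⟨hG, hnE⟩ := SimpleGraph.deleteEdges_adj.mp ((hf a b).mpr hp)
    exact SimpleGraph.deleteEdges_adj.mpr ⟨hG, fun hm => hnE (hD hm)⟩

lemma pf_mono {G1 G2 : SimpleGraph V}
    (h : ∀ Q : Set V, InducesPrison G2 Q → InducesPrison G1 Q) :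
    PrisonFree G1 → PrisonFree G2 := by
  intro hpf hc
  obtain ⟨Q, hQ⟩ := hc
  exact hpf ⟨Q, h Q hQ⟩

/-- Deleting edges disjoint from the `F`-internal ones preserves the hypotheses. -/
lemma hyp_del {A : Set (Sym2 V)} (hP : IsCMP G F Pc)
    (hA : ∀ e ∈ A, e ∉ edgesWithin G F) :
    IsCMP (G.deleteEdges A) F Pc ∧
      edgesWithin (G.deleteEdges A) F = edgesWithin G F := by
  have hadj : ∀ u ∈ F, ∀ v ∈ F, ((G.deleteEdges A).Adj u v ↔ G.Adj u v) := by
    intro u hu v hv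
    rw [SimpleGraph.deleteEdges_adj]
    constructor
    · exact And.left
    · intro h
      exact ⟨h, fun hm => hA _ hm (mem_edgesWithin.mpr ⟨h, hu, hv⟩)⟩
  constructor
  · obtain ⟨h1, h2, h3, h4⟩ := hP
    exact ⟨h1, h2, h3, fun u hu v hv => (hadj u hu v hv).trans (h4 u hu v hv)⟩
  · have hind : inducedOn (G.deleteEdges A) F = inducedOn G F := by
      ext u v
      show (G.deleteEdges A).Adj u v ∧ u ∈ F ∧ v ∈ F ↔ G.Adj u v ∧ u ∈ F ∧ v ∈ F
      constructor
      · rintro ⟨h, hu, hv⟩; exact ⟨(hadj u hu v hv).mp h, hu, hv⟩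
      · rintro ⟨h, hu, hv⟩; exact ⟨(hadj u hu v hv).mpr h, hu, hv⟩
    unfold edgesWithin
    rw [hind]

lemma hmeet_del {A : Set (Sym2 V)} (hmeet : ∀ v ∉ F, MeetsAtMostOneClass G Pc v) :
    ∀ v ∉ F, MeetsAtMostOneClass (G.deleteEdges A) Pc v := by
  intro v hv C hC D hD h1 h2
  obtain ⟨x, hx, hxadj⟩ := h1
  obtain ⟨y, hy, hyadj⟩ := h2
  exact hmeet v hv C hC D hD ⟨x, hx, (SimpleGraph.deleteEdges_adj.mp hxadj).1⟩
    ⟨y, hy, (SimpleGraph.deleteEdges_adj.mp hyadj).1⟩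

lemma del_del (G : SimpleGraph V) (s t : Set (Sym2 V)) :
    (G.deleteEdges s).deleteEdges t = G.deleteEdges (s ∪ t) := by
  ext u v; simp [SimpleGraph.deleteEdges_adj]

end Aux

/-- Safeness of Reduction Rule 3: let `F' ∈ cmd₃(G−S)` and let
`F ⊇ F'` be an inclusion-wise maximal set such that `G[F]` is complete multipartite
and every vertex outside `F` has neighbours in at most one class of `F`. Then for
every `k`, `(G,k)` is a yes-instance of Prison-Free Edge Deletion iff the instance
obtained by deleting all edges of `G[F]` is. -/
theorem rule_buble_safe {V : Type*} [Fintype V] (G : SimpleGraph V)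
    (S : Set V) (F' : Set V) (hF' : Cmd G Sᶜ 3 F')
    (F : Set V) (hsub : F' ⊆ F)
    (hcmp : ∃ P : Set (Set V), IsCMP G F P ∧
      ∀ v ∉ F, MeetsAtMostOneClass G P v)
    (hmax : ∀ F'' : Set V, F ⊆ F'' → F' ⊆ F'' →
      (∃ P : Set (Set V), IsCMP G F'' P ∧
        ∀ v ∉ F'', MeetsAtMostOneClass G P v) → F'' = F) :
    ∀ k : ℕ, DeletionYes G k ↔ DeletionYes (G.deleteEdges (edgesWithin G F)) k := by
  obtain ⟨Pc, hP, hmeet⟩ := hcmp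
  intro k
  constructor
  · rintro ⟨A, hAE, hAfin, hAcard, hApf⟩
    refine ⟨A \ edgesWithin G F, ?_, hAfin.subset Set.diff_subset,
      le_trans (Set.ncard_le_ncard Set.diff_subset hAfin) hAcard, ?_⟩
    · intro e he
      rw [SimpleGraph.edgeSet_deleteEdges]
      exact ⟨hAE he.1, he.2⟩
    · have hA' : ∀ e ∈ A \ edgesWithin G F, e ∉ edgesWithin G F := fun e he => he.2
      obtain ⟨hP2, hEq⟩ := hyp_del hP hA'
      have hmeet2 := hmeet_del (A := A \ edgesWithin G F) hmeet
      have hg : (G.deleteEdges (edgesWithin G F)).deleteEdges (A \ edgesWithin G F)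
          = (G.deleteEdges (A \ edgesWithin G F)).deleteEdges
              (edgesWithin (G.deleteEdges (A \ edgesWithin G F)) F) := by
        rw [hEq, del_del, del_del, Set.union_comm]
      rw [hg]
      have hg2 : G.deleteEdges A
          = (G.deleteEdges (A \ edgesWithin G F)).deleteEdges (A ∩ edgesWithin G F) := by
        rw [del_del]
        congr 1
        ext e
        simp only [Set.mem_union, Set.mem_diff, Set.mem_inter_iff]
        tauto
      rw [hg2] at hApf
      refine pf_mono (fun Q hQ => ?_) hApf
      exact transfer2 hP2 hmeet2
        (by rw [hEq]; exact Set.inter_subset_right) hQ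
  · rintro ⟨A, hAE, hAfin, hAcard, hApf⟩
    have hAE' : ∀ e ∈ A, e ∈ G.edgeSet ∧ e ∉ edgesWithin G F := by
      intro e he
      have h := hAE he
      rw [SimpleGraph.edgeSet_deleteEdges] at h
      exact h
    refine ⟨A, fun e he => (hAE' e he).1, hAfin, hAcard, ?_⟩
    obtain ⟨hP2, hEq⟩ := hyp_del hP (fun e he => (hAE' e he).2)
    have hmeet2 := hmeet_del (A := A) hmeet
    have hg : (G.deleteEdges (edgesWithin G F)).deleteEdges A
        = (G.deleteEdges A).deleteEdges (edgesWithin (G.deleteEdges A) F) := by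
      rw [hEq, del_del, del_del, Set.union_comm]
    rw [hg] at hApf
    exact pf_mono (fun Q hQ => transfer1 hP2 hmeet2 (fun e he => he) hQ) hApf


end PrisonFreePaper
end
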